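/- Let m ≥ 2 and ν ≥ 2 be integers with 2^{ν-1} ≤ m < 2^ν. Then the sequence a_n = f_{m,n}(-1) satisfies Δ^{2^ν} a_n = a_n for all n ≥ 0, where Δ^r denotes the r-th forward difference operator. -/

import Mathlib

open Finset fwdDiff

private lemma neg_one_pow_congr_mod {a b : ℕ} (h : a % 2 = b % 2) : (-1:ℤ)^a = (-1:ℤ)^b := by
  rw [← Nat.div_add_mod a 2, ← Nat.div_add_mod b 2, pow_add, pow_add, pow_mul, pow_mul]
  simp [h]

private lemma choose_add_two_pow_modEq : ∀ (ν : ℕ) (m j : ℕ), m < 2 ^ ν →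
    (j + 2 ^ ν).choose m ≡ j.choose m [MOD 2]
  | 0, m, j, hm => by
      interval_cases m
      simp [Nat.choose_zero_right, Nat.ModEq.refl]
  | (ν+1), m, j, hm => by
      have h1 : (j + 2 ^ (ν+1)) % 2 = j % 2 := by
        rw [pow_succ]; omega
      have h2 : (j + 2 ^ (ν+1)) / 2 = j / 2 + 2 ^ ν := by
        rw [pow_succ]; omega
      have hm2 : m / 2 < 2 ^ ν := by
        rw [pow_succ] at hm; omega
      calc (j + 2 ^ (ν+1)).choose m
          ≡ ((j + 2^(ν+1)) % 2).choose (m % 2) * ((j + 2^(ν+1)) / 2).choose (m / 2) [MOD 2] :=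
            Choose.choose_modEq_choose_mod_mul_choose_div_nat
        _ = (j % 2).choose (m % 2) * (j / 2 + 2 ^ ν).choose (m / 2) := by rw [h1, h2]
        _ ≡ (j % 2).choose (m % 2) * (j / 2).choose (m / 2) [MOD 2] :=
            Nat.ModEq.mul_left _ (choose_add_two_pow_modEq ν (m/2) (j/2) hm2)
        _ ≡ j.choose m [MOD 2] := (Choose.choose_modEq_choose_mod_mul_choose_div_nat).symm

private def A (b : ℕ → ℤ) (t : ℕ) : ℤ := ∑ j ∈ range (t + 1), (t.choose j : ℤ) * b j

private lemma fwdDiff_A (b : ℕ → ℤ) : Δ_[1] (A b) = A (fun j => b (j + 1)) := by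
  funext n
  show A b (n + 1) - A b n = _
  have h1 : A b (n+1) = (∑ j ∈ range (n+1), (n.choose j : ℤ) * b (j+1))
      + ((∑ j ∈ range (n+1), (n.choose (j+1) : ℤ) * b (j+1)) + b 0) := by
    rw [A, Finset.sum_range_succ' _ (n+1)]
    have : ∀ j ∈ range (n+1), (((n+1).choose (j+1) : ℤ)) * b (j+1)
        = (n.choose j : ℤ) * b (j+1) + (n.choose (j+1) : ℤ) * b (j+1) := by
      intro j _
      rw [Nat.choose_succ_succ]; push_cast; ring
    rw [Finset.sum_congr rfl this, Finset.sum_add_distrib]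
    simp [add_assoc]
  have h2 : A b n = (∑ j ∈ range (n+1), (n.choose (j+1) : ℤ) * b (j+1)) + b 0 := by
    rw [A, Finset.sum_range_succ' _ n, Finset.sum_range_succ]
    simp
  rw [h1, h2, A]
  ring

private lemma fwdDiff_iter_A (r : ℕ) : ∀ b : ℕ → ℤ,
    Δ_[1] ^[r] (A b) = A (fun j => b (j + r)) := by
  induction r with
  | zero => intro b; simp
  | succ r ih =>
      intro b
      rw [Function.iterate_succ_apply, fwdDiff_A, ih]
      have : (fun j => b (j + r + 1)) = fun j => b (j + (r + 1)) := by
        rfl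
      rw [this]

private lemma main_lemma (b : ℕ → ℤ) (r n : ℕ) (hb : ∀ j, b (j + r) = b j) :
    ∑ k ∈ range (r + 1), (-1:ℤ)^k * (r.choose k : ℤ) * A b (n + r - k) = A b n := by
  have hrefl : ∑ k ∈ range (r + 1), (-1:ℤ)^k * (r.choose k : ℤ) * A b (n + r - k)
      = ∑ k ∈ range (r + 1), ((-1:ℤ)^(r - k) * ((r.choose k : ℤ))) * A b (n + k) := by
    rw [← Finset.sum_range_reflect]
    apply Finset.sum_congr rfl
    intro j hj
    rw [mem_range] at hj
    have hj' : j ≤ r := by omega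
    have e1 : r + 1 - 1 - j = r - j := by omega
    have e2 : n + r - (r - j) = n + j := by omega
    rw [e1, e2, Nat.choose_symm hj']
  rw [hrefl]
  have := fwdDiff_iter_eq_sum_shift (h := (1:ℕ)) (A b) r n
  simp only [smul_eq_mul, mul_one, zsmul_eq_mul] at this
  rw [← this, fwdDiff_iter_A r b, funext hb]

theorem stmt_8 (m ν : ℕ) (hm : 2 ≤ m) (hν : 2 ≤ ν)
    (h1 : 2 ^ (ν - 1) ≤ m) (h2 : m < 2 ^ ν) (n : ℕ) :
    (∑ k ∈ Finset.range (2 ^ ν + 1), (-1 : ℤ) ^ k * ((2 ^ ν).choose k : ℤ) *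
        (∑ j ∈ Finset.range (n + 2 ^ ν - k + 1),
          ((n + 2 ^ ν - k).choose j : ℤ) * (-1 : ℤ) ^ (j.choose m)))
      = ∑ j ∈ Finset.range (n + 1), (n.choose j : ℤ) * (-1 : ℤ) ^ (j.choose m) := by
  have hb : ∀ j : ℕ, ((-1:ℤ) ^ ((j + 2 ^ ν).choose m)) = (-1:ℤ) ^ (j.choose m) := by
    intro j
    exact neg_one_pow_congr_mod (choose_add_two_pow_modEq ν m j h2)
  have := main_lemma (fun j => (-1:ℤ) ^ (j.choose m)) (2 ^ ν) n hb
  simpa [A] using this
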